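/- (Commutativity of info interventions) For an SCM over an acyclic graph and two disjoint intervention sets A, B ⊆ V, applying info interventions in either order yields the same counterfactual variables: (X_v^{σ(x̃_A)})^{σ(x̃_B)} = (X_v^{σ(x̃_B)})^{σ(x̃_A)} for every node v. -/
import Mathlib


/-- Commutativity of info interventions. For an SCM over an acyclic graph
(parent relation well-founded) with structural equations `X_v = f_v(X_{pa(v)})`
(`f v` depending only on the parent coordinates), and two disjoint intervention sets
`A, B`, applying the info interventions `σ(x̃_A)` and `σ(x̃_B)` in either order yields the
same counterfactual variables: `(X_v^{σ(x̃_A)})^{σ(x̃_B)} = (X_v^{σ(x̃_B)})^{σ(x̃_A)}` for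
every node `v`. Here `Y` solves the structural equations of the composition
`σ(x̃_B) ∘ σ(x̃_A)` and `Z` those of `σ(x̃_A) ∘ σ(x̃_B)`. -/
theorem info_intervention_commute {V Ω : Type*} [DecidableEq V]
    (pa : V → Finset V) (f : V → (V → Ω) → Ω)
    (hloc : ∀ v (x y : V → Ω), (∀ j ∈ pa v, x j = y j) → f v x = f v y)
    (hwf : WellFounded (fun u v : V => u ∈ pa v))
    (A B : Finset V) (hAB : Disjoint A B) (xA xB : V → Ω) (Y Z : V → Ω)
    (hY : ∀ v, Y v = f v (fun j => if j ∈ B then xB j else if j ∈ A then xA j else Y j))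
    (hZ : ∀ v, Z v = f v (fun j => if j ∈ A then xA j else if j ∈ B then xB j else Z j)) :
    ∀ v, Y v = Z v := by
  intro v
  induction v using hwf.induction with
  | _ v ih =>
    rw [hY v, hZ v]
    apply hloc
    intro j hj
    by_cases hB : j ∈ B
    · have hA : j ∉ A := fun h => (Finset.disjoint_left.mp hAB h) hB
      simp [hA, hB]
    · by_cases hA : j ∈ A
      · simp [hA, hB]
      · simp [hA, hB, ih j hj]
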